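/- For every odd integer k > 3, the complement of the odd cycle C_k is a core: every graph homomorphism from the complement of C_k to itself is an automorphism. -/

import Mathlib

open SimpleGraph Finset
open scoped Fin.CommRing Fin.NatCast

lemma fin_fact1 (n : ℕ) : (1 : Fin (n+4)) ≠ 0 := by
  intro h; have := congrArg Fin.val h
  rw [show ((1:Fin (n+4)).val) = 1 from rfl, show ((0:Fin (n+4)).val) = 0 from rfl] at this
  omega

lemma fin_fact3 (n : ℕ) : (3 : Fin (n+4)) ≠ 0 := by
  intro h; have := congrArg Fin.val h
  rw [show ((3:Fin (n+4)).val) = 3 from rfl, show ((0:Fin (n+4)).val) = 0 from rfl] at this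
  omega

lemma no_triangle {n : ℕ} {u v w : Fin (n+4)}
    (huv : (cycleGraph (n+4)).Adj u v) (hvw : (cycleGraph (n+4)).Adj v w)
    (huw : (cycleGraph (n+4)).Adj u w) : False := by
  have h1 := fin_fact1 n
  have h3 := fin_fact3 n
  have huv' : u - v = 1 ∨ v - u = 1 := cycleGraph_adj.mp huv
  have hvw' : v - w = 1 ∨ w - v = 1 := cycleGraph_adj.mp hvw
  have huw' : u - w = 1 ∨ w - u = 1 := cycleGraph_adj.mp huw
  have e1 : u - v = 1 ∨ u - v = -1 := by
    rcases huv' with h | h; · exact Or.inl h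
    · right; rw [← h]; ring
  have e2 : v - w = 1 ∨ v - w = -1 := by
    rcases hvw' with h | h; · exact Or.inl h
    · right; rw [← h]; ring
  have e3 : u - w = 1 ∨ u - w = -1 := by
    rcases huw' with h | h; · exact Or.inl h
    · right; rw [← h]; ring
  have key : u - w = (u - v) + (v - w) := by ring
  rcases e1 with e1 | e1 <;> rcases e2 with e2 | e2 <;> rw [e1, e2] at key <;>
    rcases e3 with e3 | e3 <;> rw [e3] at key
  · exact h1 (by linear_combination -key)
  · exact h3 (by linear_combination -key)
  · exact h1 (by linear_combination key)
  · exact h1 (by linear_combination -key)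
  · exact h1 (by linear_combination key)
  · exact h1 (by linear_combination -key)
  · exact h3 (by linear_combination key)
  · exact h1 (by linear_combination key)

/-- For every odd integer `k > 3`, the complement of the odd cycle `C_k` is a core:
every graph homomorphism from the complement of `C_k` to itself is an automorphism. -/
theorem compl_odd_cycle_is_core (k : ℕ) (hk : 3 < k) (hodd : Odd k) :
    ∀ f : (SimpleGraph.cycleGraph k)ᶜ →g (SimpleGraph.cycleGraph k)ᶜ,
      Function.Bijective f := by
  obtain ⟨n, rfl⟩ : ∃ n, k = n + 4 := ⟨k - 4, by omega⟩
  intro f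
  -- reflection property
  have href : ∀ x y : Fin (n+4), (f x = f y ∨ (cycleGraph (n+4)).Adj (f x) (f y)) → (x = y ∨ (cycleGraph (n+4)).Adj x y) := by
    intro x y h
    by_contra hc
    push_neg at hc
    have hadj : (cycleGraph (n+4))ᶜ.Adj x y := ⟨hc.1, hc.2⟩
    have := f.map_adj hadj
    rw [compl_adj] at this
    rcases h with h | h
    · exact this.1 h
    · exact this.2 h
  -- fiber counts
  set t : Fin (n+4) → ℕ := fun a => (univ.filter (fun x => f x = a)).card with ht
  have hAdjSucc : ∀ a : Fin (n+4), (cycleGraph (n+4)).Adj a (a+1) := by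
    intro a
    rw [cycleGraph_adj]
    right; ring
  have claimA : ∀ a : Fin (n+4), t a + t (a+1) ≤ 2 := by
    intro a
    have hane : a ≠ a + 1 := by
      intro h
      exact fin_fact1 n (by linear_combination -h)
    have hdisj : Disjoint (univ.filter (fun x => f x = a)) (univ.filter (fun x => f x = a+1)) := by
      rw [Finset.disjoint_left]
      intro x hx hx'
      simp only [mem_filter] at hx hx'
      exact hane (hx.2 ▸ hx'.2)
    have hcard : t a + t (a+1) = (univ.filter (fun x => f x = a ∨ f x = a+1)).card := by
      rw [filter_or, card_union_of_disjoint hdisj]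
    rw [hcard]
    by_contra hc
    push_neg at hc
    obtain ⟨x, hx, y, hy, z, hz, hxy, hxz, hyz⟩ := Finset.two_lt_card.mp hc
    have pairAdj : ∀ u v : Fin (n+4),
        u ∈ univ.filter (fun x => f x = a ∨ f x = a+1) →
        v ∈ univ.filter (fun x => f x = a ∨ f x = a+1) → u ≠ v → (cycleGraph (n+4)).Adj u v := by
      intro u v hu hv huv
      simp only [mem_filter] at hu hv
      have : f u = f v ∨ (cycleGraph (n+4)).Adj (f u) (f v) := by
        rcases hu.2 with h | h <;> rcases hv.2 with h' | h'
        · exact Or.inl (h.trans h'.symm)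
        · exact Or.inr (by rw [h, h']; exact hAdjSucc a)
        · exact Or.inr (by rw [h, h']; exact (hAdjSucc a).symm)
        · exact Or.inl (h.trans h'.symm)
      rcases href u v this with h | h
      · exact absurd h huv
      · exact h
    exact no_triangle (pairAdj x y hx hy hxy) (pairAdj y z hy hz hyz) (pairAdj x z hx hz hxz)
  have claimB : ∑ a : Fin (n+4), t a = n + 4 := by
    have := Finset.card_eq_sum_card_fiberwise
      (fun (x : Fin (n+4)) (_ : x ∈ univ) => Finset.mem_univ (f x))
    rw [Finset.card_univ, Fintype.card_fin] at this
    exact this.symm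
  have claimC : ∑ a : Fin (n+4), (t a + t (a+1)) = 2 * (n + 4) := by
    rw [Finset.sum_add_distrib, claimB]
    have : ∑ a : Fin (n+4), t (a+1) = ∑ a : Fin (n+4), t a :=
      Equiv.sum_comp (Equiv.addRight (1 : Fin (n+4))) t
    rw [this, claimB]; ring
  have claimD : ∀ a : Fin (n+4), t a + t (a+1) = 2 := by
    have h2 : ∑ a : Fin (n+4), (t a + t (a+1)) = ∑ _a : Fin (n+4), 2 := by
      rw [claimC, Finset.sum_const, Finset.card_univ, Fintype.card_fin, smul_eq_mul]; ring
    intro a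
    exact (Finset.sum_eq_sum_iff_of_le (fun i _ => claimA i)).mp h2 a (Finset.mem_univ a)
  -- injectivity
  have hinj : Function.Injective f := by
    intro x y hxy
    by_contra hne
    set a := f x with ha
    have h2le : 2 ≤ t a := by
      have hsub : ({x, y} : Finset (Fin (n+4))) ⊆ univ.filter (fun z => f z = a) := by
        intro z hz
        simp only [Finset.mem_insert, Finset.mem_singleton] at hz
        simp only [mem_filter, Finset.mem_univ, true_and]
        rcases hz with rfl | rfl
        · exact ha.symm
        · exact hxy.symm
      calc 2 = ({x, y} : Finset (Fin (n+4))).card := (Finset.card_pair hne).symm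
        _ ≤ _ := Finset.card_le_card hsub
    have hta : t a = 2 := le_antisymm (by have := claimA a; omega) h2le
    have alt : ∀ j : ℕ, t (a + (j : Fin (n+4))) = if j % 2 = 0 then 2 else 0 := by
      intro j
      induction j with
      | zero => simpa using hta
      | succ j ih =>
        have hD := claimD (a + (j : Fin (n+4)))
        have hcast : (a + ((j+1 : ℕ) : Fin (n+4))) = (a + (j : Fin (n+4))) + 1 := by
          push_cast; ring
        rw [hcast]
        by_cases hp : j % 2 = 0
        · rw [hp, if_pos rfl] at ih
          rw [if_neg (by omega)]
          omega
        · rw [if_neg hp] at ih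
          rw [if_pos (by omega)]
          omega
    have hk0 : ((n + 4 : ℕ) : Fin (n+4)) = 0 := by
      exact_mod_cast Fin.natCast_self (n+4)
    have := alt (n+4)
    rw [hk0, add_zero, hta] at this
    have hodd' : (n+4) % 2 = 1 := Nat.odd_iff.mp hodd
    rw [if_neg (by omega)] at this
    omega
  exact Finite.injective_iff_bijective.mp hinj
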